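/- arXiv:2401.11486 — 2 statements merged into one kernel-verified Lean document; each statement's English description precedes it below -/
import Mathlib

section
/- Let n be even. Then for any m ∈ ℕ, L_m ⊆ Δ(L_{m+2} ⊕ ℝ[x]); that is, for any f ∈ L_m there exists g ∈ L_{m+2} ⊕ ℝ[x] such that Δg = f on ℝⁿ \ {0}. -/
open MeasureTheory Finset Matrix

noncomputable section

/-- The Euclidean norm `r = |x|` on `Fin n → ℝ`. -/
def rnorm {n : ℕ} (x : Fin n → ℝ) : ℝ := Real.sqrt (∑ i, x i ^ 2)

/-- The partial derivative `∂ᵢ f` at `x`. -/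
def partialD {n : ℕ} (i : Fin n) (f : (Fin n → ℝ) → ℝ) (x : Fin n → ℝ) : ℝ :=
  fderiv ℝ f x (Pi.single i 1)

/-- The Laplacian `Δ f = ∑ ∂ᵢ∂ᵢ f`. -/
def laplacian {n : ℕ} (f : (Fin n → ℝ) → ℝ) (x : Fin n → ℝ) : ℝ :=
  ∑ i, partialD i (fun y => partialD i f y) x

/-- The constant-coefficient divergence-form operator `-div(K₀ ∇u) = -∑ (K₀)ᵢⱼ ∂ᵢ∂ⱼ u`. -/
def divFormConst {n : ℕ} (K0 : Matrix (Fin n) (Fin n) ℝ) (u : (Fin n → ℝ) → ℝ)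
    (x : Fin n → ℝ) : ℝ :=
  -∑ i, ∑ j, K0 i j * partialD i (fun y => partialD j u y) x

/-- The divergence-form operator `-div(K(x) ∇u) = -∑ ∂ᵢ(Kᵢⱼ(x) ∂ⱼ u)`. -/
def divForm {n : ℕ} (Kf : (Fin n → ℝ) → Matrix (Fin n) (Fin n) ℝ) (u : (Fin n → ℝ) → ℝ)
    (x : Fin n → ℝ) : ℝ :=
  -∑ i, ∑ j, partialD i (fun y => Kf y i j * partialD j u y) x

/-- The space `E^{n+2m}_{k+2m}`: span of `x^α / r^(n+2m)` over `|α| = k + 2m`. -/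
def Esp (n m k : ℕ) : Submodule ℝ ((Fin n → ℝ) → ℝ) :=
  Submodule.span ℝ
    {f | ∃ α : Fin n → ℕ, (∑ i, α i) = k + 2 * m ∧
      f = fun x => (∏ i, x i ^ α i) / rnorm x ^ (n + 2 * m)}

/-- `f` is a (real multivariate) polynomial function. -/
def IsPolyFun {n : ℕ} (f : (Fin n → ℝ) → ℝ) : Prop :=
  ∃ p : MvPolynomial (Fin n) ℝ, f = fun x => MvPolynomial.eval x p

/-- The space `ℝ[x]` of polynomial functions. -/
def PolySp (n : ℕ) : Submodule ℝ ((Fin n → ℝ) → ℝ) :=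
  Submodule.span ℝ {f | IsPolyFun f}

/-- The singular part `E^{n+2m,s}_{k+2m}`: span of the non-polynomial basis elements. -/
def EspS (n m k : ℕ) : Submodule ℝ ((Fin n → ℝ) → ℝ) :=
  Submodule.span ℝ
    {f | ∃ α : Fin n → ℕ, (∑ i, α i) = k + 2 * m ∧
      f = (fun x => (∏ i, x i ^ α i) / rnorm x ^ (n + 2 * m)) ∧
      ¬ IsPolyFun (fun x => (∏ i, x i ^ α i) / rnorm x ^ (n + 2 * m))}

/-- The space `L_m`: span of `x^α log r` over `|α| = m`. -/
def Lsp (n m : ℕ) : Submodule ℝ ((Fin n → ℝ) → ℝ) :=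
  Submodule.span ℝ
    {f | ∃ α : Fin n → ℕ, (∑ i, α i) = m ∧
      f = fun x => (∏ i, x i ^ α i) * Real.log (rnorm x)}

/-- The space `F^{n+2m}_{k+2m}`. -/
def Fsp (n m k : ℕ) : Submodule ℝ ((Fin n → ℝ) → ℝ) :=
  if k < n then Esp n m k else EspS n m k ⊔ Lsp n (k - n)

/-- The space `Ẽ^{n+2m}_{k+2m}`. -/
def Etil (n m k : ℕ) : Submodule ℝ ((Fin n → ℝ) → ℝ) :=
  if k < n then Fsp n m k else Fsp n m k ⊔ PolySp n

/-- Composition `f ∘ T` with a matrix `T`. -/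
def compT {n : ℕ} (T : Matrix (Fin n) (Fin n) ℝ) (f : (Fin n → ℝ) → ℝ) :
    (Fin n → ℝ) → ℝ :=
  fun x => f (T.mulVec x)

/-- A bounded smooth domain in `ℝⁿ`. -/
def IsSmoothDomain {n : ℕ} (Ω : Set (Fin n → ℝ)) : Prop :=
  IsOpen Ω ∧ Bornology.IsBounded Ω ∧ Ω.Nonempty ∧
  ∃ φ : (Fin n → ℝ) → ℝ, ContDiff ℝ (⊤ : ℕ∞) φ ∧ Ω = {x | φ x < 0} ∧
    ∀ x ∈ frontier Ω, φ x = 0 ∧ fderiv ℝ φ x ≠ 0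

/-- `f ∈ C^{l,γ}(s)`: derivatives up to order `l` continuous on `s`, the `l`-th derivative
`γ`-Hölder continuous on `s`. -/
def CHolder {n : ℕ} (l : ℕ) (γ : ℝ) (s : Set (Fin n → ℝ)) (f : (Fin n → ℝ) → ℝ) : Prop :=
  ContDiffOn ℝ l f s ∧
  ∃ C : ℝ, ∀ x ∈ s, ∀ y ∈ s,
    ‖iteratedFDerivWithin ℝ l f s x - iteratedFDerivWithin ℝ l f s y‖ ≤ C * dist x y ^ γ

/-- The `C^{l,γ}(s)` norm of `f` is at most `C`. -/
def HolderNormLE {n : ℕ} (l : ℕ) (γ : ℝ) (s : Set (Fin n → ℝ)) (f : (Fin n → ℝ) → ℝ)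
    (C : ℝ) : Prop :=
  (∀ j ≤ l, ∀ x ∈ s, ‖iteratedFDerivWithin ℝ j f s x‖ ≤ C) ∧
  ∀ x ∈ s, ∀ y ∈ s,
    ‖iteratedFDerivWithin ℝ l f s x - iteratedFDerivWithin ℝ l f s y‖ ≤ C * dist x y ^ γ

/-- `G` is the Green's function of `-div(K(x)∇·)` on `Ω` with zero Dirichlet boundary
condition, in the integral-form characterization. -/
def IsGreen {n : ℕ} (Ω : Set (Fin n → ℝ)) (Kf : (Fin n → ℝ) → Matrix (Fin n) (Fin n) ℝ)
    (G : (Fin n → ℝ) → (Fin n → ℝ) → ℝ) : Prop :=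
  (∀ y ∈ Ω, ∀ x ∈ frontier Ω, G x y = 0) ∧
  ∀ u : (Fin n → ℝ) → ℝ, ContDiffOn ℝ 2 u Ω → ContDiffOn ℝ 1 u (closure Ω) →
    (∀ x ∈ frontier Ω, u x = 0) →
    ∀ y ∈ Ω, u y = ∫ x in Ω, G x y * divForm Kf u x

/-- The fundamental solution `Φ₀` of `-Δ` in `ℝⁿ`. -/
def Phi0 (n : ℕ) (x : Fin n → ℝ) : ℝ :=
  if n = 2 then -(1 / (2 * Real.pi)) * Real.log (rnorm x)
  else rnorm x ^ ((2 : ℝ) - (n : ℝ)) /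
    ((n : ℝ) * ((n : ℝ) - 2) * (volume (Metric.ball (0 : EuclideanSpace ℝ (Fin n)) 1)).toReal)

namespace LapAux
open MvPolynomial Finset

variable {n : ℕ}

/-- The polynomial `r² = ∑ Xᵢ²`. -/
def r2p (n : ℕ) : MvPolynomial (Fin n) ℝ := ∑ i, X i ^ 2

/-- The algebraic Laplacian. -/
def mlap (p : MvPolynomial (Fin n) ℝ) : MvPolynomial (Fin n) ℝ :=
  ∑ i, pderiv i (pderiv i p)

lemma mlap_add (p q : MvPolynomial (Fin n) ℝ) : mlap (p + q) = mlap p + mlap q := by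
  simp [mlap, Finset.sum_add_distrib]

lemma mlap_C_mul (a : ℝ) (p : MvPolynomial (Fin n) ℝ) : mlap (C a * p) = C a * mlap p := by
  simp [mlap, pderiv_C_mul, Finset.mul_sum]

lemma degree_eq_sum (v : Fin n →₀ ℕ) : (∑ i, v i) = v.degree := by
  rw [Finsupp.degree]
  exact (Finset.sum_subset (Finset.subset_univ _)
    (by intro x _ hx; exact Finsupp.notMem_support_iff.mp hx)).symm

lemma mem_support_sum {p : MvPolynomial (Fin n) ℝ} {d : ℕ} (hp : p.IsHomogeneous d)
    {v : Fin n →₀ ℕ} (hv : v ∈ p.support) : (∑ i, v i) = d := by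
  rw [degree_eq_sum, Finsupp.degree_eq_weight_one]
  exact hp (MvPolynomial.mem_support_iff.mp hv)

lemma euler_monomial (v : Fin n →₀ ℕ) (a : ℝ) :
    ∑ i, X i * pderiv i (monomial v a) = (∑ i, v i) • monomial v a := by
  rw [Finset.sum_smul]
  refine Finset.sum_congr rfl fun i _ => ?_
  rw [pderiv_monomial]
  rcases Nat.eq_zero_or_pos (v i) with h | h
  · simp [h]
  · have hv : v - Finsupp.single i 1 + Finsupp.single i 1 = v := by
      ext j
      rcases eq_or_ne j i with rfl | hj
      · simp only [Finsupp.add_apply, Finsupp.tsub_apply, Finsupp.single_eq_same]; omega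
      · simp [Finsupp.single_apply, hj.symm]
    rw [X, monomial_mul, add_comm, hv, smul_monomial]
    congr 1
    rw [one_mul, nsmul_eq_mul, mul_comm]

/-- Euler's identity for homogeneous polynomials. -/
lemma euler {p : MvPolynomial (Fin n) ℝ} {d : ℕ} (hp : p.IsHomogeneous d) :
    ∑ i, X i * pderiv i p = C (d : ℝ) * p := by
  conv_lhs => rw [p.as_sum]
  have : ∀ i : Fin n, X i * pderiv i (∑ v ∈ p.support, monomial v (coeff v p))
      = ∑ v ∈ p.support, X i * pderiv i (monomial v (coeff v p)) := by
    intro i; rw [map_sum, Finset.mul_sum]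
  rw [Finset.sum_congr rfl fun i _ => this i, Finset.sum_comm]
  conv_rhs => rw [p.as_sum, Finset.mul_sum]
  refine Finset.sum_congr rfl fun v hv => ?_
  rw [euler_monomial, mem_support_sum hp hv, ← Nat.cast_smul_eq_nsmul ℝ, smul_eq_C_mul]

lemma isHomog_pderiv {p : MvPolynomial (Fin n) ℝ} {d : ℕ} (hp : p.IsHomogeneous d) (i : Fin n) :
    (pderiv i p).IsHomogeneous (d - 1) := by
  conv_lhs => rw [p.as_sum]
  rw [map_sum]
  refine MvPolynomial.IsHomogeneous.sum _ _ _ fun v hv => ?_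
  rw [pderiv_monomial]
  rcases Nat.eq_zero_or_pos (v i) with h | h
  · simp [h]
    exact isHomogeneous_zero _ _ _
  · refine isHomogeneous_monomial _ ?_
    have hsum : (∑ j, v j) = d := mem_support_sum hp hv
    rw [← degree_eq_sum]
    have key : ∀ j, (v - Finsupp.single i 1 : Fin n →₀ ℕ) j = v j - (Finsupp.single i 1) j :=
      fun j => Finsupp.tsub_apply _ _ _
    rw [Finset.sum_congr rfl (fun j _ => key j)]
    rw [← Finset.sum_erase_add _ _ (Finset.mem_univ i)] at hsum ⊢
    have h1 : ∑ j ∈ Finset.univ.erase i, (v j - (Finsupp.single i 1) j)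
        = ∑ j ∈ Finset.univ.erase i, v j := by
      refine Finset.sum_congr rfl fun j hj => ?_
      rw [Finsupp.single_eq_of_ne' (Finset.ne_of_mem_erase hj).symm]
      omega
    rw [h1, Finsupp.single_eq_same]
    omega

lemma isHomog_mlap {p : MvPolynomial (Fin n) ℝ} {d : ℕ} (hp : p.IsHomogeneous d) :
    (mlap p).IsHomogeneous (d - 2) := by
  refine MvPolynomial.IsHomogeneous.sum _ _ _ fun i _ => ?_
  have := isHomog_pderiv (isHomog_pderiv hp i) i
  rwa [Nat.sub_sub] at this

lemma pderiv_isHomog_zero {q : MvPolynomial (Fin n) ℝ} (hq : q.IsHomogeneous 0) (j : Fin n) :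
    pderiv j q = 0 := by
  conv_lhs => rw [q.as_sum, map_sum]
  refine Finset.sum_eq_zero fun v hv => ?_
  have hs : (∑ i, v i) = 0 := mem_support_sum hq hv
  have : v j = 0 := by
    have := Finset.sum_eq_zero_iff.mp hs j (Finset.mem_univ j)
    exact this
  rw [pderiv_monomial, this]
  simp

lemma mlap_eq_zero_of_lt_two {p : MvPolynomial (Fin n) ℝ} {d : ℕ} (hp : p.IsHomogeneous d)
    (hd : d < 2) : mlap p = 0 := by
  refine Finset.sum_eq_zero fun i _ => ?_
  have h1 : (pderiv i p).IsHomogeneous 0 := by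
    have := isHomog_pderiv hp i
    have hd' : d = 0 ∨ d = 1 := by omega
    rcases hd' with rfl | rfl <;> simpa using this
  rw [pderiv_isHomog_zero h1]

lemma pderiv_r2p (i : Fin n) : pderiv i (r2p n) = C 2 * X i := by
  rw [r2p, map_sum]
  rw [Finset.sum_eq_single i]
  · rw [pderiv_pow, pderiv_X_self, mul_one, pow_one]
    rw [show ((2:ℕ) : MvPolynomial (Fin n) ℝ) = C 2 by push_cast; rfl]
  · intro j _ hj
    rw [pderiv_pow, pderiv_X_of_ne hj]
    ring
  · intro h; exact absurd (Finset.mem_univ i) h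

lemma isHomog_r2p : (r2p n).IsHomogeneous 2 :=
  MvPolynomial.IsHomogeneous.sum _ _ _ fun i _ => isHomogeneous_X_pow i 2

/-- Key identity: `Δ(r² U) = 2n U + 4 ∑ Xᵢ ∂ᵢU + r² ΔU`. -/
lemma mlap_r2p_mul (U : MvPolynomial (Fin n) ℝ) :
    mlap (r2p n * U) = C (n : ℝ) * U * 2 + (∑ i, X i * pderiv i U) * 4
      + r2p n * mlap U := by
  have h2 : ∀ i : Fin n, pderiv i (pderiv i (r2p n * U))
      = C 2 * U + C 4 * (X i * pderiv i U) + r2p n * pderiv i (pderiv i U) := by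
    intro i
    simp only [pderiv_mul, pderiv_r2p, map_add, pderiv_C, pderiv_X_self]
    ring_nf
    rw [show (C 2 : MvPolynomial (Fin n) ℝ) = 2 from map_ofNat _ 2,
      show (C 4 : MvPolynomial (Fin n) ℝ) = 4 from map_ofNat _ 4]
    ring
  rw [mlap, Finset.sum_congr rfl fun i _ => h2 i]
  rw [Finset.sum_add_distrib, Finset.sum_add_distrib, Finset.sum_const, Finset.card_univ,
    Fintype.card_fin, ← Finset.mul_sum, ← Finset.mul_sum, mlap, nsmul_eq_mul,
    ← map_natCast (C : ℝ →+* MvPolynomial (Fin n) ℝ) n,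
    show (C 2 : MvPolynomial (Fin n) ℝ) = 2 from map_ofNat _ 2,
    show (C 4 : MvPolynomial (Fin n) ℝ) = 4 from map_ofNat _ 4]
  ring

/-- `Δ(r² U) = (2n+4d) U + r² ΔU` for `U` homogeneous of degree `d`. -/
lemma mlap_r2p_mul_homog {U : MvPolynomial (Fin n) ℝ} {d : ℕ} (hU : U.IsHomogeneous d) :
    mlap (r2p n * U) = C (2 * n + 4 * d : ℝ) * U + r2p n * mlap U := by
  rw [mlap_r2p_mul, euler hU, C_add, C_mul, C_mul,
    show (C 2 : MvPolynomial (Fin n) ℝ) = 2 from map_ofNat _ 2,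
    show (C 4 : MvPolynomial (Fin n) ℝ) = 4 from map_ofNat _ 4]
  ring

/-- Main algebraic solver: invert `C e + r²Δ` on homogeneous polynomials. -/
lemma solve (d : ℕ) (e : ℝ) (he : 0 < e) (p : MvPolynomial (Fin n) ℝ)
    (hp : p.IsHomogeneous d) :
    ∃ S : MvPolynomial (Fin n) ℝ, S.IsHomogeneous d ∧ C e * S + r2p n * mlap S = p := by
  induction d using Nat.strong_induction_on generalizing e p with
  | _ d IH =>
  rcases lt_or_ge d 2 with hd | hd
  · refine ⟨C e⁻¹ * p, hp.C_mul e⁻¹, ?_⟩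
    rw [mlap_C_mul, mlap_eq_zero_of_lt_two hp hd, mul_zero, mul_zero, add_zero,
      ← mul_assoc, ← C_mul, mul_inv_cancel₀ he.ne', C_1, one_mul]
  · set e' : ℝ := e + 2 * n + 4 * d - 8 with he'def
    have he' : 0 < e' := by
      have : (2 : ℝ) ≤ d := by exact_mod_cast hd
      have : (0:ℝ) ≤ (n:ℝ) := Nat.cast_nonneg n
      simp only [he'def]
      linarith
    have hp' : (C (-e⁻¹) * mlap p).IsHomogeneous (d - 2) :=
      (isHomog_mlap hp).C_mul _
    obtain ⟨U, hU, hUeq⟩ := IH (d - 2) (by omega) e' he' _ hp'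
    refine ⟨C e⁻¹ * p + r2p n * U, ?_, ?_⟩
    · refine (hp.C_mul e⁻¹).add ?_
      have := isHomog_r2p.mul hU
      rwa [show 2 + (d - 2) = d by omega] at this
    · rw [mlap_add, mlap_C_mul, mlap_r2p_mul_homog hU]
      have hc : (2 * (n:ℝ) + 4 * (d - 2 : ℕ)) = e' - e := by
        rw [Nat.cast_sub hd, he'def]; ring
      rw [hc]
      have hinv : (C e : MvPolynomial (Fin n) ℝ) * C e⁻¹ = 1 := by
        rw [← C_mul, mul_inv_cancel₀ he.ne', C_1]
      have hCe' : (C (e' - e) : MvPolynomial (Fin n) ℝ) = C e' - C e := by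
        rw [C_sub]
      rw [hCe']
      have hneg : (C (-e⁻¹) : MvPolynomial (Fin n) ℝ) = -C e⁻¹ := by rw [C_neg]
      rw [hneg] at hUeq
      linear_combination r2p n * hUeq + p * hinv

open ContinuousLinearMap in
/-- Derivative of multivariate polynomial evaluation. -/
lemma hasFDerivAt_eval (p : MvPolynomial (Fin n) ℝ) (x : Fin n → ℝ) :
    HasFDerivAt (fun y : Fin n → ℝ => eval y p)
      (∑ i, eval x (pderiv i p) • (proj i : ((Fin n) → ℝ) →L[ℝ] ℝ)) x := by
  induction p using MvPolynomial.induction_on with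
  | C a =>
    simp only [eval_C, pderiv_C, map_zero, zero_smul, Finset.sum_const_zero]
    exact hasFDerivAt_const _ _
  | add p q hp hq =>
    have := hp.add hq
    simp only [map_add, eval_add] at this ⊢
    simp only [add_smul, Finset.sum_add_distrib]
    exact this
  | mul_X p j hp =>
    have hXj : HasFDerivAt (fun y : Fin n → ℝ => y j) (proj j : ((Fin n) → ℝ) →L[ℝ] ℝ) x :=
      hasFDerivAt_apply j x
    have key := hp.mul hXj
    have hfun : (fun y : Fin n → ℝ => eval y (p * X j)) = fun y => eval y p * y j := by
      funext y; rw [eval_mul, eval_X]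
    rw [hfun]
    refine key.congr_fderiv ?_
    ext v
    simp only [ContinuousLinearMap.sum_apply, ContinuousLinearMap.smul_apply,
      ContinuousLinearMap.add_apply, proj_apply, smul_eq_mul, pderiv_mul, eval_add, eval_mul,
      eval_X, pderiv_X]
    simp only [add_mul]
    rw [Finset.sum_add_distrib, add_comm (Finset.sum _ _) (Finset.sum _ _)]
    congr 1
    · rw [Finset.sum_eq_single j]
      · simp
      · intro i _ hij
        simp [Pi.single_apply, hij.symm]
      · intro h; exact absurd (Finset.mem_univ j) h
    · rw [Finset.mul_sum]
      exact Finset.sum_congr rfl fun i _ => by ring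

lemma sumproj_apply (c : Fin n → ℝ) (i : Fin n) :
    (∑ j, c j • (ContinuousLinearMap.proj j : ((Fin n) → ℝ) →L[ℝ] ℝ)) (Pi.single i 1) = c i := by
  simp only [ContinuousLinearMap.sum_apply, ContinuousLinearMap.smul_apply,
    ContinuousLinearMap.proj_apply, smul_eq_mul]
  rw [Finset.sum_eq_single i]
  · simp
  · intro j _ hj; simp [Pi.single_apply, hj]
  · intro h; exact absurd (Finset.mem_univ i) h

lemma eval_r2p (x : Fin n → ℝ) : eval x (r2p n) = ∑ i, x i ^ 2 := by
  simp [r2p]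

lemma r2_pos {x : Fin n → ℝ} (hx : x ≠ 0) : 0 < ∑ i, x i ^ 2 := by
  obtain ⟨i, hi⟩ := Function.ne_iff.mp hx
  refine Finset.sum_pos' (fun j _ => sq_nonneg _) ⟨i, Finset.mem_univ i, ?_⟩
  have : x i ≠ 0 := hi
  positivity

lemma log_rnorm_eq (x : Fin n → ℝ) : Real.log (rnorm x) = Real.log (∑ i, x i ^ 2) / 2 :=
  Real.log_sqrt (Finset.sum_nonneg fun i _ => sq_nonneg _)

open ContinuousLinearMap in
lemma hasFDerivAt_log_rnorm {x : Fin n → ℝ} (hx : x ≠ 0) :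
    HasFDerivAt (fun y : Fin n → ℝ => Real.log (rnorm y))
      ((2 * ∑ i, x i ^ 2)⁻¹ • ∑ i, eval x (pderiv i (r2p n)) • (proj i : ((Fin n) → ℝ) →L[ℝ] ℝ))
      x := by
  have h0 : eval x (r2p n) ≠ 0 := by rw [eval_r2p]; exact (r2_pos hx).ne'
  have h := ((hasFDerivAt_eval (r2p n) x).log h0).const_mul ((2:ℝ))⁻¹
  have hfun : (fun y : Fin n → ℝ => Real.log (rnorm y))
      = fun y => (2:ℝ)⁻¹ * Real.log (eval y (r2p n)) := by
    funext y; rw [log_rnorm_eq, eval_r2p, div_eq_inv_mul]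
  rw [hfun]
  exact h.congr_fderiv (by rw [eval_r2p, mul_inv, smul_smul])

open ContinuousLinearMap in
lemma partialD_gfun (Q q : MvPolynomial (Fin n) ℝ) {y : Fin n → ℝ} (hy : y ≠ 0) (i : Fin n) :
    partialD i (fun z => eval z Q * Real.log (rnorm z) + eval z q) y
      = eval y (pderiv i Q) * Real.log (rnorm y)
        + eval y (Q * X i) * (eval y (r2p n))⁻¹ + eval y (pderiv i q) := by
  have hD := ((hasFDerivAt_eval Q y).mul (hasFDerivAt_log_rnorm hy)).add (hasFDerivAt_eval q y)
  rw [partialD, HasFDerivAt.fderiv (f := fun z => eval z Q * Real.log (rnorm z) + eval z q) hD]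
  simp only [ContinuousLinearMap.add_apply, ContinuousLinearMap.smul_apply, sumproj_apply,
    smul_eq_mul]
  rw [pderiv_r2p, eval_r2p, eval_mul, eval_mul, eval_C, eval_X]
  have hr2 : (∑ j, y j ^ 2) ≠ 0 := (r2_pos hy).ne'
  field_simp
  ring

open ContinuousLinearMap in
lemma partialD2_gfun (Q q : MvPolynomial (Fin n) ℝ) {x : Fin n → ℝ} (hx : x ≠ 0) (i : Fin n) :
    partialD i (fun y => partialD i
        (fun z => eval z Q * Real.log (rnorm z) + eval z q) y) x
      = eval x (pderiv i (pderiv i Q)) * Real.log (rnorm x)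
        + (2 * (x i * eval x (pderiv i Q)) + eval x Q) * (∑ j, x j ^ 2)⁻¹
        - 2 * eval x Q * (x i * x i) * ((∑ j, x j ^ 2) ^ 2)⁻¹
        + eval x (pderiv i (pderiv i q)) := by
  have hr : (∑ j, x j ^ 2) ≠ 0 := (r2_pos hx).ne'
  have h0 : eval x (r2p n) ≠ 0 := by rw [eval_r2p]; exact hr
  set φ : (Fin n → ℝ) → ℝ := fun y => eval y (pderiv i Q) * Real.log (rnorm y)
      + eval y (Q * X i) * (eval y (r2p n))⁻¹ + eval y (pderiv i q) with hφ
  have hEq : (fun y => partialD i (fun z => eval z Q * Real.log (rnorm z) + eval z q) y)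
      =ᶠ[nhds x] φ := by
    filter_upwards [IsOpen.mem_nhds isOpen_compl_singleton hx] with y hy
    exact partialD_gfun Q q hy i
  have hinv : HasFDerivAt (fun y : Fin n → ℝ => (eval y (r2p n))⁻¹)
      (-(((eval x (r2p n)) ^ 2)⁻¹ • ∑ j, eval x (pderiv j (r2p n)) • (proj j : ((Fin n) → ℝ) →L[ℝ] ℝ))) x := by
    have := (hasDerivAt_inv h0).comp_hasFDerivAt x (hasFDerivAt_eval (r2p n) x)
    simpa [Function.comp_def, neg_smul] using this
  have hφD := (((hasFDerivAt_eval (pderiv i Q) x).mul (hasFDerivAt_log_rnorm hx)).add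
      ((hasFDerivAt_eval (Q * X i) x).mul hinv)).add (hasFDerivAt_eval (pderiv i q) x)
  rw [partialD, hEq.fderiv_eq, HasFDerivAt.fderiv (f := φ) hφD]
  simp only [ContinuousLinearMap.add_apply, ContinuousLinearMap.smul_apply,
    ContinuousLinearMap.neg_apply, sumproj_apply, smul_eq_mul]
  rw [eval_r2p, pderiv_r2p, eval_mul, eval_C, eval_X, eval_mul (p := Q), eval_X,
    pderiv_mul, pderiv_X_self, mul_one, map_add, eval_mul, eval_X]
  field_simp
  ring

/-- Main computation: Laplacian of `(eval Q) · log r + eval q` away from the origin. -/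
lemma laplacian_gfun (Q q : MvPolynomial (Fin n) ℝ) {x : Fin n → ℝ} (hx : x ≠ 0) :
    laplacian (fun z => eval z Q * Real.log (rnorm z) + eval z q) x
      = eval x (mlap Q) * Real.log (rnorm x)
        + (2 * (∑ i, x i * eval x (pderiv i Q)) + ((n : ℝ) - 2) * eval x Q)
            * (∑ j, x j ^ 2)⁻¹
        + eval x (mlap q) := by
  have hr : (0:ℝ) < ∑ j, x j ^ 2 := r2_pos hx
  have key : ∀ i : Fin n,
      eval x (pderiv i (pderiv i Q)) * Real.log (rnorm x)
        + (2 * (x i * eval x (pderiv i Q)) + eval x Q) * (∑ j, x j ^ 2)⁻¹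
        - 2 * eval x Q * (x i * x i) * ((∑ j, x j ^ 2) ^ 2)⁻¹
        + eval x (pderiv i (pderiv i q))
      = eval x (pderiv i (pderiv i Q)) * Real.log (rnorm x)
        + eval x (pderiv i (pderiv i q))
        + (x i * eval x (pderiv i Q)) * (2 * (∑ j, x j ^ 2)⁻¹)
        + eval x Q * (∑ j, x j ^ 2)⁻¹
        - (x i ^ 2) * (2 * eval x Q * ((∑ j, x j ^ 2) ^ 2)⁻¹) := fun i => by ring
  rw [laplacian, Finset.sum_congr rfl fun i _ => (partialD2_gfun Q q hx i).trans (key i)]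
  rw [Finset.sum_sub_distrib, Finset.sum_add_distrib, Finset.sum_add_distrib,
    Finset.sum_add_distrib]
  have s1 : ∑ i, eval x (pderiv i (pderiv i Q)) * Real.log (rnorm x)
      = eval x (mlap Q) * Real.log (rnorm x) := by rw [← Finset.sum_mul, mlap, map_sum]
  have sq : ∑ i, eval x (pderiv i (pderiv i q)) = eval x (mlap q) := by rw [mlap, map_sum]
  have s2 : ∑ i, (x i * eval x (pderiv i Q)) * (2 * (∑ j, x j ^ 2)⁻¹)
      = (∑ i, x i * eval x (pderiv i Q)) * (2 * (∑ j, x j ^ 2)⁻¹) :=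
    (Finset.sum_mul _ _ _).symm
  have s3 : ∑ _i : Fin n, eval x Q * (∑ j, x j ^ 2)⁻¹
      = (n : ℝ) * (eval x Q * (∑ j, x j ^ 2)⁻¹) := by
    rw [Finset.sum_const, Finset.card_univ, Fintype.card_fin, nsmul_eq_mul]
  have s4 : ∑ i, (x i ^ 2) * (2 * eval x Q * ((∑ j, x j ^ 2) ^ 2)⁻¹)
      = (∑ j, x j ^ 2) * (2 * eval x Q * ((∑ j, x j ^ 2) ^ 2)⁻¹) :=
    (Finset.sum_mul _ _ _).symm
  rw [s1, sq, s2, s3, s4]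
  field_simp
  ring

lemma eval_monomial_prod (v : Fin n →₀ ℕ) (x : Fin n → ℝ) :
    eval x (monomial v (1:ℝ)) = ∏ i, x i ^ v i := by
  rw [eval_monomial, one_mul, Finsupp.prod_pow]

lemma log_part_mem {Q : MvPolynomial (Fin n) ℝ} {k : ℕ} (hQ : Q.IsHomogeneous k) :
    (fun x : Fin n → ℝ => eval x Q * Real.log (rnorm x)) ∈ Lsp n k := by
  have hrep : (fun x : Fin n → ℝ => eval x Q * Real.log (rnorm x))
      = ∑ v ∈ Q.support, coeff v Q •
          (fun x : Fin n → ℝ => (∏ i, x i ^ v i) * Real.log (rnorm x)) := by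
    funext x
    rw [Finset.sum_apply]
    conv_lhs => rw [Q.as_sum]
    rw [map_sum, Finset.sum_mul]
    refine Finset.sum_congr rfl fun v hv => ?_
    have : eval x (monomial v (coeff v Q)) = coeff v Q * ∏ i, x i ^ v i := by
      rw [eval_monomial, Finsupp.prod_pow]
    rw [this, Pi.smul_apply, smul_eq_mul]
    ring
  rw [hrep]
  exact Submodule.sum_mem _ fun v hv => Submodule.smul_mem _ _
    (Submodule.subset_span ⟨fun i => v i, mem_support_sum hQ hv, rfl⟩)

lemma eval_sum_x_pderiv {Q : MvPolynomial (Fin n) ℝ} {k : ℕ} (hQ : Q.IsHomogeneous k)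
    (x : Fin n → ℝ) : ∑ i, x i * eval x (pderiv i Q) = (k : ℝ) * eval x Q := by
  have := congrArg (eval x) (euler hQ)
  rw [map_sum, eval_mul, eval_C] at this
  rw [← this]
  exact Finset.sum_congr rfl fun i _ => by rw [eval_mul, eval_X]

/-- Construction for a single monomial generator of `L_m`. -/
lemma main_mono (hn : 0 < n) (m : ℕ) (α : Fin n → ℕ) (hα : (∑ i, α i) = m) :
    ∃ Q q : MvPolynomial (Fin n) ℝ, Q.IsHomogeneous (m + 2) ∧
      ∀ x : Fin n → ℝ, x ≠ 0 →
        laplacian (fun z => eval z Q * Real.log (rnorm z) + eval z q) x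
          = (∏ i, x i ^ α i) * Real.log (rnorm x) := by
  set v : Fin n →₀ ℕ := Finsupp.equivFunOnFinite.symm α with hv
  have hvc : ∀ i, v i = α i := fun i => rfl
  have hp₀ : (monomial v (1:ℝ)).IsHomogeneous m := by
    refine isHomogeneous_monomial _ ?_
    rw [← degree_eq_sum]
    simpa [hvc] using hα
  have he : (0:ℝ) < 2 * n + 4 * m := by
    have : (1:ℝ) ≤ n := by exact_mod_cast hn
    positivity
  obtain ⟨P, hP, hPeq⟩ := solve m _ he _ hp₀
  obtain ⟨S, hS, hSeq⟩ := solve m _ he (C (-(2 * (m:ℝ) + n + 2)) * P) (hP.C_mul _)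
  refine ⟨r2p n * P, r2p n * S, ?_, ?_⟩
  · have := isHomog_r2p.mul hP
    rwa [show 2 + m = m + 2 by omega] at this
  · intro x hx
    have hr : (0:ℝ) < ∑ j, x j ^ 2 := r2_pos hx
    rw [laplacian_gfun _ _ hx]
    have hQhom : (r2p n * P).IsHomogeneous (m + 2) := by
      have := isHomog_r2p.mul hP
      rwa [show 2 + m = m + 2 by omega] at this
    have hmQ : mlap (r2p n * P) = monomial v 1 := by
      rw [mlap_r2p_mul_homog hP]; exact hPeq
    have hmq : mlap (r2p n * S) = C (-(2 * (m:ℝ) + n + 2)) * P := by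
      rw [mlap_r2p_mul_homog hS]; exact hSeq
    rw [hmQ, hmq, eval_monomial_prod, eval_sum_x_pderiv hQhom]
    simp only [eval_mul, eval_C, eval_r2p]
    have hvp : (∏ i, x i ^ v i) = ∏ i, x i ^ α i := by
      exact Finset.prod_congr rfl fun i _ => by rw [hvc]
    rw [hvp]
    push_cast
    field_simp
    ring

/-- Additivity bridge for the canonical form. -/
lemma key_closure (m : ℕ) {f : (Fin n → ℝ) → ℝ} (hf : f ∈ Lsp n m) (hn : 0 < n) :
    ∃ Q q : MvPolynomial (Fin n) ℝ, Q.IsHomogeneous (m + 2) ∧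
      ∀ x : Fin n → ℝ, x ≠ 0 →
        laplacian (fun z => eval z Q * Real.log (rnorm z) + eval z q) x = f x := by
  induction hf using Submodule.span_induction with
  | mem g hg =>
    obtain ⟨α, hα, rfl⟩ := hg
    obtain ⟨Q, q, hQ, hl⟩ := main_mono hn m α hα
    exact ⟨Q, q, hQ, fun x hx => (hl x hx).trans rfl⟩
  | zero =>
    refine ⟨0, 0, isHomogeneous_zero _ _ _, fun x hx => ?_⟩
    rw [laplacian_gfun _ _ hx]
    simp [mlap]
  | add u w hu hw ihu ihw =>
    obtain ⟨Q1, q1, hQ1, hl1⟩ := ihu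
    obtain ⟨Q2, q2, hQ2, hl2⟩ := ihw
    refine ⟨Q1 + Q2, q1 + q2, hQ1.add hQ2, fun x hx => ?_⟩
    rw [laplacian_gfun _ _ hx, Pi.add_apply, ← hl1 x hx, ← hl2 x hx,
      laplacian_gfun _ _ hx, laplacian_gfun _ _ hx]
    simp only [mlap_add, map_add, Finset.sum_add_distrib, mul_add]
    ring
  | smul a u hu ihu =>
    obtain ⟨Q1, q1, hQ1, hl1⟩ := ihu
    refine ⟨C a * Q1, C a * q1, hQ1.C_mul a, fun x hx => ?_⟩
    rw [laplacian_gfun _ _ hx, Pi.smul_apply, smul_eq_mul, ← hl1 x hx,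
      laplacian_gfun _ _ hx]
    simp only [mlap_C_mul, pderiv_C_mul, eval_mul, eval_C, ← Finset.mul_sum]
    have : ∑ i, x i * (a * eval x (pderiv i Q1)) = a * ∑ i, x i * eval x (pderiv i Q1) := by
      rw [Finset.mul_sum]; exact Finset.sum_congr rfl fun i _ => by ring
    rw [this]
    ring

end LapAux

/-- `L_m ⊆ Δ(L_{m+2} ⊕ ℝ[x])` for even `n`. -/
theorem Lsp_subset_laplacian
    (n : ℕ) (hn : 2 ≤ n) (heven : Even n) (m : ℕ)
    (f : (Fin n → ℝ) → ℝ) (hf : f ∈ Lsp n m) :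
    ∃ g ∈ Lsp n (m + 2) ⊔ PolySp n, ∀ x : Fin n → ℝ, x ≠ 0 → laplacian g x = f x := by
  obtain ⟨Q, q, hQ, hlap⟩ := LapAux.key_closure m hf (by omega)
  refine ⟨_, ?_, hlap⟩
  have h1 : (fun z : Fin n → ℝ => MvPolynomial.eval z Q * Real.log (rnorm z)) ∈ Lsp n (m + 2) :=
    LapAux.log_part_mem hQ
  have h2 : (fun z : Fin n → ℝ => MvPolynomial.eval z q) ∈ PolySp n :=
    Submodule.subset_span ⟨q, rfl⟩
  exact Submodule.add_mem _ (Submodule.mem_sup_left h1) (Submodule.mem_sup_right h2)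

end
end

section
/- Let n ≥ 2, let Ω ⊂ ℝⁿ be a bounded smooth domain, let K be a positive definite smooth matrix-valued function on Ω, and let γ ∈ (0,1). Let H^l(x,y) be the remainder in the order-l expansion of the Green's function G_K (for l ∈ ℕ*). Then for the regular part H_K(x,y) = H⁰(x,y) one has, for every l ∈ ℕ*, H_K(x,y) = Σ_{i=n−1}^{n+l−2} Φ_i(T_y(x−y)) + H^l(x,y) for all x, y ∈ Ω; moreover Φ_i(0) = 0 for every i ≥ n−1, so that the Robin's function satisfies R_K(x) = H_K(x,x) = H^l(x,x) for every l ∈ ℕ* and x ∈ Ω. -/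
open MeasureTheory Finset Matrix

noncomputable section

section Helpers

variable {n : ℕ}

lemma continuous_rnorm : Continuous (rnorm (n := n)) := by
  unfold rnorm
  exact Real.continuous_sqrt.comp (by fun_prop)

lemma rnorm_zero : rnorm (0 : Fin n → ℝ) = 0 := by simp [rnorm]

lemma rnorm_nonneg (x : Fin n → ℝ) : 0 ≤ rnorm x := Real.sqrt_nonneg _

lemma abs_le_rnorm (x : Fin n → ℝ) (i : Fin n) : |x i| ≤ rnorm x := by
  rw [← Real.sqrt_sq_eq_abs]
  exact Real.sqrt_le_sqrt
    (Finset.single_le_sum (f := fun j => x j ^ 2) (fun j _ => sq_nonneg _) (Finset.mem_univ i))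

lemma prod_abs_le (x : Fin n → ℝ) (α : Fin n → ℕ) :
    |∏ i, x i ^ α i| ≤ rnorm x ^ (∑ i, α i) := by
  rw [Finset.abs_prod, ← Finset.prod_pow_eq_pow_sum]
  refine Finset.prod_le_prod (fun i _ => abs_nonneg _) (fun i _ => ?_)
  rw [abs_pow]
  exact pow_le_pow_left₀ (abs_nonneg _) (abs_le_rnorm x i) _

lemma prod_zero_of_pos {α : Fin n → ℕ} (h : 0 < ∑ i, α i) :
    (∏ i, (0 : ℝ) ^ α i) = 0 := by
  obtain ⟨i, -, hi⟩ : ∃ i ∈ Finset.univ, α i ≠ 0 := by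
    by_contra hc
    push_neg at hc
    simp only [Finset.sum_eq_zero hc] at h
    exact lt_irrefl 0 h
  exact Finset.prod_eq_zero (Finset.mem_univ i) (zero_pow hi)

/-- The submodule of functions tending to `0` at `0` and vanishing at `0`. -/
def vanishSub (n : ℕ) : Submodule ℝ ((Fin n → ℝ) → ℝ) where
  carrier := {f | Filter.Tendsto f (nhds 0) (nhds 0) ∧ f 0 = 0}
  zero_mem' := ⟨tendsto_const_nhds, rfl⟩
  add_mem' := by
    rintro f g ⟨hf, hf0⟩ ⟨hg, hg0⟩
    exact ⟨by have h := hf.add hg; rw [add_zero] at h; exact h, by simp [hf0, hg0]⟩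
  smul_mem' := by
    rintro c f ⟨hf, hf0⟩
    refine ⟨?_, by simp [hf0]⟩
    have : Filter.Tendsto (c • f) (nhds 0) (nhds (c • 0)) := hf.const_smul c
    simpa using this

lemma gen_mem_vanish_div {α : Fin n → ℕ} {d : ℕ} (h : d < ∑ i, α i) :
    (fun x => (∏ i, x i ^ α i) / rnorm x ^ d) ∈ vanishSub n := by
  set a := ∑ i, α i with ha
  constructor
  · apply squeeze_zero_norm' (a := fun x => rnorm x ^ (a - d))
    · filter_upwards with x
      rcases eq_or_lt_of_le (rnorm_nonneg x) with hr | hr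
      · have hnum : |∏ i, x i ^ α i| ≤ 0 := by
          have := prod_abs_le x α
          rw [← hr] at this
          simpa [zero_pow (show (∑ i, α i) ≠ 0 by omega)] using this
        have hnum0 : (∏ i, x i ^ α i) = 0 := abs_nonpos_iff.mp hnum
        simp [hnum0, pow_nonneg (rnorm_nonneg x)]
      · have hb : |∏ i, x i ^ α i| ≤ rnorm x ^ a := prod_abs_le x α
        rw [Real.norm_eq_abs, abs_div, abs_pow, abs_of_pos hr]
        rw [div_le_iff₀ (by positivity)]
        calc |∏ i, x i ^ α i| ≤ rnorm x ^ a := hb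
          _ = rnorm x ^ (a - d) * rnorm x ^ d := by
              rw [← pow_add]; congr 1; omega
    · have hc : Continuous fun x : Fin n → ℝ => rnorm x ^ (a - d) :=
        continuous_rnorm.pow _
      have := hc.tendsto 0
      simpa [rnorm_zero, zero_pow (show a - d ≠ 0 by omega)] using this
  · simp [prod_zero_of_pos (show 0 < a by omega), zero_pow, div_eq_zero_iff]

lemma abs_log_le {r : ℝ} (h0 : 0 < r) (h1 : r ≤ 1) :
    |Real.log r| ≤ 2 / Real.sqrt r := by
  have hs : 0 < Real.sqrt r := Real.sqrt_pos.mpr h0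
  have hlog : Real.log r = 2 * Real.log (Real.sqrt r) := by
    rw [Real.log_sqrt h0.le]; ring
  have hlogle : Real.log (Real.sqrt r) ≤ 0 := by
    apply Real.log_nonpos hs.le
    exact Real.sqrt_le_one.mpr h1
  have hinv : -Real.log (Real.sqrt r) = Real.log (Real.sqrt r)⁻¹ := by
    rw [Real.log_inv]
  have hkey : Real.log (Real.sqrt r)⁻¹ ≤ (Real.sqrt r)⁻¹ := by
    have := Real.log_le_sub_one_of_pos (inv_pos.mpr hs)
    linarith
  rw [hlog, abs_mul, abs_of_nonneg (by norm_num : (0:ℝ) ≤ 2), abs_of_nonpos hlogle]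
  rw [div_eq_mul_inv]
  have : -Real.log (Real.sqrt r) ≤ (Real.sqrt r)⁻¹ := by rw [hinv]; exact hkey
  nlinarith

lemma gen_mem_vanish_log {α : Fin n → ℕ} (h : 0 < ∑ i, α i) :
    (fun x => (∏ i, x i ^ α i) * Real.log (rnorm x)) ∈ vanishSub n := by
  set a := ∑ i, α i with ha
  constructor
  · apply squeeze_zero_norm' (a := fun x => 2 * Real.sqrt (rnorm x))
    · have hev : ∀ᶠ x in nhds (0 : Fin n → ℝ), rnorm x < 1 := by
        have := continuous_rnorm.tendsto (0 : Fin n → ℝ)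
        rw [rnorm_zero] at this
        exact this.eventually_lt_const one_pos
      filter_upwards [hev] with x hx
      rcases eq_or_lt_of_le (rnorm_nonneg x) with hr | hr
      · have hnum : |∏ i, x i ^ α i| ≤ 0 := by
          have := prod_abs_le x α
          rw [← hr] at this
          simpa [zero_pow (show (∑ i, α i) ≠ 0 by omega)] using this
        have hnum0 : (∏ i, x i ^ α i) = 0 := abs_nonpos_iff.mp hnum
        rw [Real.norm_eq_abs]
        simp only [hnum0, zero_mul, abs_zero]
        positivity
      · set r := rnorm x with hrdef
        have h1 : r ≤ 1 := hx.le
        have hb : |∏ i, x i ^ α i| ≤ r ^ a := prod_abs_le x α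
        have hra : r ^ a ≤ r := by
          calc r ^ a ≤ r ^ 1 := pow_le_pow_of_le_one hr.le h1 (by omega)
            _ = r := pow_one r
        rw [Real.norm_eq_abs, abs_mul]
        calc |∏ i, x i ^ α i| * |Real.log r|
            ≤ r * (2 / Real.sqrt r) := by
              apply mul_le_mul (hb.trans hra) (abs_log_le hr h1) (abs_nonneg _) hr.le
          _ = 2 * (r / Real.sqrt r) := by ring
          _ = 2 * Real.sqrt r := by rw [Real.div_sqrt]
    · have hc : Continuous fun x : Fin n → ℝ => 2 * Real.sqrt (rnorm x) :=
        continuous_const.mul (Real.continuous_sqrt.comp continuous_rnorm)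
      have := hc.tendsto 0
      simpa [rnorm_zero] using this
  · simp [prod_zero_of_pos h]

lemma Esp_le {m k : ℕ} (h : n < k) : Esp n m k ≤ vanishSub n := by
  rw [Esp, Submodule.span_le]
  rintro f ⟨α, hα, rfl⟩
  exact gen_mem_vanish_div (by omega)

lemma EspS_le {m k : ℕ} (h : n < k) : EspS n m k ≤ vanishSub n := by
  rw [EspS, Submodule.span_le]
  rintro f ⟨α, hα, rfl, -⟩
  exact gen_mem_vanish_div (by omega)

lemma Lsp_le {m : ℕ} (h : 0 < m) : Lsp n m ≤ vanishSub n := by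
  rw [Lsp, Submodule.span_le]
  rintro f ⟨α, hα, rfl⟩
  exact gen_mem_vanish_log (by omega)

lemma Fsp_le {m k : ℕ} (h : n < k) : Fsp n m k ≤ vanishSub n := by
  rw [Fsp, if_neg (by omega)]
  exact sup_le (EspS_le h) (Lsp_le (by omega))

end Helpers

/-- The regular part `H_K = H⁰` satisfies the expansion, each `Φᵢ` with `i ≥ n-1` vanishes
at `0`, and hence `R_K(x) = H⁰(x,x) = Hˡ(x,x)`. -/
theorem regular_part_expansion_and_robin
    (n : ℕ) (hn : 2 ≤ n)
    (Ω : Set (Fin n → ℝ)) (hΩ : IsSmoothDomain Ω)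
    (Kf : (Fin n → ℝ) → Matrix (Fin n) (Fin n) ℝ)
    (hKsmooth : ∀ i j, ContDiffOn ℝ (⊤ : ℕ∞) (fun x => Kf x i j) (closure Ω))
    (hKpos : ∀ x ∈ Ω, (Kf x).PosDef)
    (hKell : ∃ Λ₁ Λ₂ : ℝ, 0 < Λ₁ ∧ 0 < Λ₂ ∧ ∀ x ∈ Ω, ∀ ζ : Fin n → ℝ,
      Λ₁ * ∑ i, ζ i ^ 2 ≤ ∑ i, ∑ j, Kf x i j * ζ i * ζ j ∧
      ∑ i, ∑ j, Kf x i j * ζ i * ζ j ≤ Λ₂ * ∑ i, ζ i ^ 2)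
    (Tm : (Fin n → ℝ) → Matrix (Fin n) (Fin n) ℝ)
    (hTm : ∀ x ∈ Ω, (Tm x).PosDef ∧ (Tm x)⁻¹ * ((Tm x)⁻¹)ᵀ = Kf x)
    (G : (Fin n → ℝ) → (Fin n → ℝ) → ℝ) (hG : IsGreen Ω Kf G)
    (γ : ℝ) (hγ0 : 0 < γ) (hγ1 : γ < 1)
    (Φ : ℕ → (Fin n → ℝ) → (Fin n → ℝ) → ℝ)
    (H : ℕ → (Fin n → ℝ) → (Fin n → ℝ) → ℝ)
    (hΦmem : ∀ i, 1 ≤ i → ∀ y ∈ Ω,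
      Φ i y ∈ (if Odd n then Esp n (2 * i - 1) (i + 2) else Fsp n (2 * i - 1) (i + 2)))
    (hHreg : ∀ l : ℕ,
      ContinuousOn (fun p : (Fin n → ℝ) × (Fin n → ℝ) => H l p.1 p.2) (Ω ×ˢ Ω))
    (hexp : ∀ l : ℕ, ∀ y ∈ Ω, ∀ x ∈ closure Ω, x ≠ y →
      G x y = (Real.sqrt (Kf y).det)⁻¹ * Phi0 n ((Tm y).mulVec (x - y))
        + ∑ i ∈ Finset.Icc 1 (n + l - 2), Φ i y ((Tm y).mulVec (x - y)) + H l x y) :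
    (∀ l : ℕ, 1 ≤ l → ∀ y ∈ Ω, ∀ x ∈ Ω,
      H 0 x y = ∑ i ∈ Finset.Icc (n - 1) (n + l - 2), Φ i y ((Tm y).mulVec (x - y))
        + H l x y) ∧
    (∀ i, n - 1 ≤ i → ∀ y ∈ Ω, Φ i y 0 = 0) ∧
    (∀ l : ℕ, 1 ≤ l → ∀ x ∈ Ω, H 0 x x = H l x x) := by
  classical
  -- Φ i y vanishes at 0 and tends to 0 at 0, for i ≥ n - 1
  have key2 : ∀ i, n - 1 ≤ i → ∀ y ∈ Ω, Φ i y ∈ vanishSub n := by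
    intro i hi y hy
    have hmem := hΦmem i (by omega) y hy
    by_cases hodd : Odd n
    · rw [if_pos hodd] at hmem
      exact Esp_le (show n < i + 2 by omega) hmem
    · rw [if_neg hodd] at hmem
      exact Fsp_le (show n < i + 2 by omega) hmem
  -- splitting of sums
  have hsplit : ∀ l : ℕ, ∀ f : ℕ → ℝ,
      ∑ i ∈ Finset.Icc 1 (n + l - 2), f i =
      ∑ i ∈ Finset.Icc 1 (n - 2), f i + ∑ i ∈ Finset.Icc (n - 1) (n + l - 2), f i := by
    intro l f
    have e1 : Finset.Icc 1 (n - 2) = Finset.Ioc 0 (n - 2) := Finset.Icc_add_one_left_eq_Ioc 0 (n - 2)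
    have e2 : Finset.Icc (n - 1) (n + l - 2) = Finset.Ioc (n - 2) (n + l - 2) := by
      rw [show n - 1 = (n - 2) + 1 by omega]
      exact Finset.Icc_add_one_left_eq_Ioc _ _
    have e3 : Finset.Icc 1 (n + l - 2) = Finset.Ioc 0 (n + l - 2) := Finset.Icc_add_one_left_eq_Ioc 0 _
    rw [e1, e2, e3]
    exact (Finset.sum_Ioc_consecutive f (Nat.zero_le _) (by omega)).symm
  -- pointwise identity for x ≠ y
  have key1 : ∀ l : ℕ, ∀ y ∈ Ω, ∀ x ∈ Ω, x ≠ y →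
      H 0 x y = ∑ i ∈ Finset.Icc (n - 1) (n + l - 2), Φ i y ((Tm y).mulVec (x - y))
        + H l x y := by
    intro l y hy x hx hxy
    have h0 := hexp 0 y hy x (subset_closure hx) hxy
    have hl := hexp l y hy x (subset_closure hx) hxy
    rw [show n + 0 - 2 = n - 2 by omega] at h0
    rw [hsplit l (fun i => Φ i y ((Tm y).mulVec (x - y)))] at hl
    linarith
  -- limit at the diagonal
  have keydiag : ∀ l : ℕ, ∀ y ∈ Ω, H 0 y y = H l y y := by
    intro l y hy
    haveI : Nontrivial (Fin n → ℝ) := by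
      haveI : Nonempty (Fin n) := ⟨⟨0, by omega⟩⟩
      infer_instance
    haveI : Filter.NeBot (nhdsWithin y {y}ᶜ) := Module.punctured_nhds_neBot ℝ _ y
    have hΩopen := hΩ.1
    -- continuity of x ↦ H l x y at y
    have hcont : ∀ m : ℕ, ContinuousAt (fun x => H m x y) y := by
      intro m
      have hmem : (Ω ×ˢ Ω) ∈ nhds ((y, y) : (Fin n → ℝ) × (Fin n → ℝ)) :=
        (hΩopen.prod hΩopen).mem_nhds ⟨hy, hy⟩
      have c0 : ContinuousAt (fun p : (Fin n → ℝ) × (Fin n → ℝ) => H m p.1 p.2) (y, y) :=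
        (hHreg m).continuousAt hmem
      have cf : ContinuousAt (fun x : Fin n → ℝ => ((x, y) : (Fin n → ℝ) × (Fin n → ℝ))) y :=
        (continuous_id.prodMk continuous_const).continuousAt
      exact ContinuousAt.comp (f := fun x : Fin n → ℝ => (x, y)) c0 cf
    set g : (Fin n → ℝ) → ℝ := fun x => H 0 x y - H l x y with hg
    set S : (Fin n → ℝ) → ℝ :=
      fun x => ∑ i ∈ Finset.Icc (n - 1) (n + l - 2), Φ i y ((Tm y).mulVec (x - y)) with hS
    have hGCont : ContinuousAt g y := (hcont 0).sub (hcont l)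
    -- S tends to 0
    have hlin : Continuous fun x : Fin n → ℝ => (Tm y).mulVec (x - y) := by
      have h1 : Continuous fun x : Fin n → ℝ => x - y :=
        continuous_id.sub continuous_const
      have h2 : Continuous fun v : Fin n → ℝ => (Tm y).mulVec v :=
        LinearMap.continuous_of_finiteDimensional ((Tm y).mulVecLin)
      exact h2.comp h1
    have hlin0 : Filter.Tendsto (fun x : Fin n → ℝ => (Tm y).mulVec (x - y)) (nhds y)
        (nhds 0) := by
      have := hlin.tendsto y
      simpa [Matrix.mulVec_zero] using this
    have hStend : Filter.Tendsto S (nhds y) (nhds 0) := by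
      rw [hS]
      have : Filter.Tendsto
          (fun x => ∑ i ∈ Finset.Icc (n - 1) (n + l - 2), Φ i y ((Tm y).mulVec (x - y)))
          (nhds y) (nhds (∑ i ∈ Finset.Icc (n - 1) (n + l - 2), (0 : ℝ))) := by
        apply tendsto_finset_sum
        intro i hi
        have hmem := key2 i (Finset.mem_Icc.mp hi).1 y hy
        exact hmem.1.comp hlin0
      simpa using this
    -- g = S eventually on the punctured neighborhood
    have heq : ∀ᶠ x in nhdsWithin y {y}ᶜ, g x = S x := by
      have hΩy : ∀ᶠ x in nhds y, x ∈ Ω := hΩopen.eventually_mem hy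
      have hΩy' : ∀ᶠ x in nhdsWithin y {y}ᶜ, x ∈ Ω := hΩy.filter_mono nhdsWithin_le_nhds
      have hne : ∀ᶠ x in nhdsWithin y {y}ᶜ, x ∈ ({y}ᶜ : Set (Fin n → ℝ)) :=
        eventually_mem_nhdsWithin
      filter_upwards [hΩy', hne] with x hxΩ hxne
      have := key1 l y hy x hxΩ (by simpa using hxne)
      simp only [hg, hS]
      linarith
    have h1 : Filter.Tendsto g (nhdsWithin y {y}ᶜ) (nhds (g y)) :=
      hGCont.tendsto.mono_left nhdsWithin_le_nhds
    have h2 : Filter.Tendsto g (nhdsWithin y {y}ᶜ) (nhds 0) :=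
      (hStend.mono_left nhdsWithin_le_nhds).congr' (heq.mono fun x hx => hx.symm)
    have : g y = 0 := tendsto_nhds_unique h1 h2
    simp only [hg] at this
    linarith
  refine ⟨?_, ?_, ?_⟩
  · intro l _ y hy x hx
    by_cases hxy : x = y
    · subst hxy
      have hzero : ∀ i ∈ Finset.Icc (n - 1) (n + l - 2),
          Φ i x ((Tm x).mulVec (x - x)) = 0 := by
        intro i hi
        have hmem := key2 i (Finset.mem_Icc.mp hi).1 x hx
        have hv : (Tm x).mulVec (x - x) = 0 := by simp [Matrix.mulVec_zero]
        rw [hv]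
        exact hmem.2
      rw [Finset.sum_congr rfl hzero]
      simpa using keydiag l x hx
    · exact key1 l y hy x hx hxy
  · intro i hi y hy
    exact (key2 i hi y hy).2
  · intro l _ x hx
    exact keydiag l x hx

end
end
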